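/- Let n ≥ 2, d ≥ 1 integers, c, v ∈ ℂⁿ, and let M = c ⊗ v be the rank-≤1 matrix with entries M_{jk} = c_j v_k. The map x ↦ x + (Mx)^d (entrywise d-th power) has Jacobian identically 1 if and only if ∑_{j=1}^n c_j^d v_j = 0. Moreover, in that case the inverse map is x = f − (Mf)^d. -/

import Mathlib

open Matrix BigOperators

/-- Jacobian determinant of a map `f : ℂ^ι → ℂ^ι` at `x`. -/
noncomputable def jacDet {ι : Type*} [Fintype ι] [DecidableEq ι]
    (f : (ι → ℂ) → (ι → ℂ)) (x : ι → ℂ) : ℂ :=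
  (LinearMap.toMatrix (Pi.basisFun ℂ ι) (Pi.basisFun ℂ ι)
    (fderiv ℂ f x).toLinearMap).det

/-- The map `x ↦ x + φ(Ax)`, with `φ` applied entrywise. -/
noncomputable def phiMap {ι : Type*} [Fintype ι] (A : Matrix ι ι ℂ) (φ : ℂ → ℂ)
    (x : ι → ℂ) : ι → ℂ :=
  fun j => x j + φ (A.mulVec x j)

/-- Domain of definition of `x ↦ x + φ(Ax)` for `φ` defined on `Ω`. -/
def phiDom {ι : Type*} [Fintype ι] (A : Matrix ι ι ℂ) (Ω : Set ℂ) : Set (ι → ℂ) :=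
  {x | ∀ j, A.mulVec x j ∈ Ω}

/-- `(A, φ)` is a good pair: the Jacobian of `x + φ(Ax)` is identically a nonzero constant. -/
def IsGoodPair {ι : Type*} [Fintype ι] [DecidableEq ι]
    (A : Matrix ι ι ℂ) (Ω : Set ℂ) (φ : ℂ → ℂ) : Prop :=
  ∃ c : ℂ, c ≠ 0 ∧ ∀ x ∈ phiDom A Ω, jacDet (phiMap A φ) x = c

/-- A matrix is universal if it forms a good pair with every analytic function. -/
def IsUniversal {ι : Type*} [Fintype ι] [DecidableEq ι] (A : Matrix ι ι ℂ) : Prop :=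
  ∀ (Ω : Set ℂ) (φ : ℂ → ℂ), IsOpen Ω → Ω.Nonempty → IsPreconnected Ω →
    AnalyticOn ℂ φ Ω → (phiDom A Ω).Nonempty → IsGoodPair A Ω φ

/-- The principal minor of `A` indexed by `I`. -/
noncomputable def principalMinor {ι : Type*} [DecidableEq ι] (A : Matrix ι ι ℂ)
    (I : Finset ι) : ℂ :=
  (A.submatrix (fun i : I => (i : ι)) (fun i : I => (i : ι))).det

noncomputable def dotC {n : ℕ} (v : Fin n → ℂ) : (Fin n → ℂ) →L[ℂ] ℂ :=
  ∑ i, v i • (ContinuousLinearMap.proj i : (Fin n → ℂ) →L[ℂ] ℂ)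

lemma dotC_apply {n : ℕ} (v y : Fin n → ℂ) : dotC v y = ∑ i, v i * y i := by
  simp [dotC]

lemma jacDet_formula {n : ℕ} (d : ℕ) (hd : 1 ≤ d) (c v : Fin n → ℂ) (x : Fin n → ℂ) :
    jacDet (fun y j => y j + ((Matrix.of fun j k : Fin n => c j * v k).mulVec y j) ^ d) x
      = 1 + (d : ℂ) * (∑ i, v i * x i) ^ (d - 1) * ∑ j, c j ^ d * v j := by
  set s : ℂ := ∑ i, v i * x i with hs
  set D : (Fin n → ℂ) →L[ℂ] ℂ := dotC v with hD
  have hDx : D x = s := dotC_apply v x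
  have hmv : ∀ (y : Fin n → ℂ) (j : Fin n),
      (Matrix.of fun j k : Fin n => c j * v k).mulVec y j = c j * D y := by
    intro y j
    simp [Matrix.mulVec, dotProduct, hD, dotC_apply, Finset.mul_sum, mul_assoc]
  set L : (Fin n → ℂ) →L[ℂ] (Fin n → ℂ) :=
    ContinuousLinearMap.pi (fun j =>
      ContinuousLinearMap.proj j + ((d : ℂ) * (c j * s) ^ (d - 1)) • (c j • D)) with hL
  have hfd : HasFDerivAt
      (fun y (j : Fin n) => y j + ((Matrix.of fun j k : Fin n => c j * v k).mulVec y j) ^ d)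
      L x := by
    apply hasFDerivAt_pi''
    intro j
    rw [hL, ContinuousLinearMap.proj_pi]
    have h1 : HasFDerivAt (𝕜 := ℂ) (fun y : Fin n → ℂ => y j) (ContinuousLinearMap.proj j) x :=
      hasFDerivAt_apply j x
    have h2 : HasFDerivAt (fun y : Fin n → ℂ => c j * D y) (c j • D) x :=
      (D.hasFDerivAt (x := x)).const_mul (c j)
    have h3 := (hasDerivAt_pow d (c j * D x)).comp_hasFDerivAt x h2
    have h4 := h1.add h3
    rw [hDx] at h4
    simp only [hmv]
    exact h4
  rw [jacDet, hfd.fderiv, LinearMap.toMatrix_eq_toMatrix']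
  have hmat : LinearMap.toMatrix' (L.toLinearMap)
      = 1 + Matrix.replicateCol Unit (fun j => (d : ℂ) * (c j * s) ^ (d - 1) * c j) * Matrix.replicateRow Unit v := by
    ext i k
    rw [LinearMap.toMatrix'_apply]
    simp only [hL, ContinuousLinearMap.coe_coe, ContinuousLinearMap.pi_apply,
      ContinuousLinearMap.add_apply, ContinuousLinearMap.proj_apply,
      ContinuousLinearMap.smul_apply, hD, dotC_apply, Matrix.add_apply, Matrix.one_apply,
      Matrix.mul_apply, Matrix.replicateCol_apply, Matrix.replicateRow_apply, Finset.univ_unique,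
      Finset.sum_singleton, smul_eq_mul]
    simp only [Pi.single_apply, mul_ite, mul_one, mul_zero, Finset.sum_ite_eq', Finset.mem_univ, if_true]
    ring
  rw [hmat, Matrix.det_one_add_replicateCol_mul_replicateRow]
  congr 1
  rw [dotProduct, Finset.mul_sum]
  refine Finset.sum_congr rfl fun j _ => ?_
  have hc : c j ^ (d - 1) * c j = c j ^ d := by
    rw [← pow_succ]; congr 1; omega
  rw [mul_pow, ← hc]; ring

theorem stmt17 (n : ℕ) (hn : 2 ≤ n) (d : ℕ) (hd : 1 ≤ d) (c v : Fin n → ℂ)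
    (M : Matrix (Fin n) (Fin n) ℂ) (hM : M = Matrix.of fun j k : Fin n => c j * v k) :
    ((∀ x : Fin n → ℂ, jacDet (fun y j => y j + (M.mulVec y j) ^ d) x = 1) ↔
      ∑ j, c j ^ d * v j = 0) ∧
    (∑ j, c j ^ d * v j = 0 →
      ∀ x : Fin n → ℂ, ∀ j,
        (x j + (M.mulVec x j) ^ d) -
          (M.mulVec (fun i => x i + (M.mulVec x i) ^ d) j) ^ d = x j) := by
  subst hM
  constructor
  · constructor
    · intro h
      by_cases hv : v = 0
      · simp [hv]
      · obtain ⟨i, hvi⟩ : ∃ i, v i ≠ 0 := by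
          by_contra hc
          push_neg at hc
          exact hv (funext hc)
        set x : Fin n → ℂ := fun k => if k = i then (v i)⁻¹ else 0 with hx
        have hs : ∑ k, v k * x k = 1 := by
          simp only [hx, mul_ite, mul_zero, Finset.sum_ite_eq', Finset.mem_univ, if_true]
          field_simp
        have := h x
        rw [jacDet_formula d hd c v x, hs, one_pow, mul_one] at this
        have h2 : (d : ℂ) * ∑ j, c j ^ d * v j = 0 := by linear_combination this
        have hd0 : (d : ℂ) ≠ 0 := Nat.cast_ne_zero.mpr (by omega)
        exact (mul_eq_zero.mp h2).resolve_left hd0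
    · intro hT x
      rw [jacDet_formula d hd c v x, hT, mul_zero, add_zero]
  · intro hT x j
    set s : ℂ := ∑ i, v i * x i with hs
    have hA : ∀ i, (Matrix.of fun j k : Fin n => c j * v k).mulVec x i = c i * s := by
      intro i
      simp [Matrix.mulVec, dotProduct, hs, Finset.mul_sum, mul_assoc]
    have key : (Matrix.of fun j k : Fin n => c j * v k).mulVec
        (fun i => x i + ((Matrix.of fun j k : Fin n => c j * v k).mulVec x i) ^ d) j
        = c j * s := by
      simp only [hA]
      simp only [Matrix.mulVec, dotProduct, Matrix.of_apply]
      have expand : ∑ k, c j * v k * (x k + (c k * s) ^ d)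
          = c j * (∑ k, v k * x k) + (c j * s ^ d) * ∑ k, c k ^ d * v k := by
        rw [Finset.mul_sum, Finset.mul_sum, ← Finset.sum_add_distrib]
        refine Finset.sum_congr rfl fun k _ => ?_
        rw [mul_pow]; ring
      rw [expand, hT, mul_zero, add_zero, ← hs]
    rw [key, hA j]
    ring
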